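/- Let λ : A → ℤ be order preserving. Then for every positive integer n one has O_{P,A}(nλ) = n · O_{P,A}(λ) (the dilate {nφ : φ ∈ O_{P,A}(λ)}), and the function n ↦ Ω_{P,A}(nλ) agrees, for all positive integers n, with a polynomial in n of degree equal to the dimension of O_{P,A}(λ); that is, n ↦ Ω_{P,A}(nλ) is the Ehrhart polynomial of the lattice polytope O_{P,A}(λ). -/

import Mathlib

open scoped Pointwise
open Finset Polynomial

noncomputable section

namespace MOP

attribute [local instance] Classical.propDecidable

variable {P : Type*} [Fintype P] [PartialOrder P]
variable {m : ℕ}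

/-- codes for values: either a marked level or position `i` in gap `j`. -/
abbrev Code (m : ℕ) := Fin m ⊕ (Fin (m - 1) × ℕ)

def glow (j : Fin (m - 1)) : Fin m := ⟨j.1, by have := j.2; omega⟩
def ghigh (j : Fin (m - 1)) : Fin m := ⟨j.1 + 1, by have := j.2; omega⟩

def keyL : Code m → ℕ ×ₗ ℕ
  | .inl j => toLex (j.1, 0)
  | .inr x => toLex (x.1.1, x.2 + 1)

lemma keyL_injective : Function.Injective (keyL (m := m)) := by
  rintro (j | ⟨j, i⟩) (j' | ⟨j', i'⟩) h <;>
    simp only [keyL, toLex_inj, Prod.mk.injEq] at h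
  · exact congrArg Sum.inl (Fin.ext h.1)
  · omega
  · omega
  · obtain ⟨h1, h2⟩ := h
    exact congrArg Sum.inr (Prod.ext (Fin.ext h1) (by omega))

section gev

variable {α : Type*} [LinearOrder α]

def gev (W : Fin m → α) (u : Fin (m - 1) → ℕ → α) : Code m → α
  | .inl j => W j
  | .inr x => u x.1 x.2

def Supp (k : Fin (m - 1) → ℕ) : Code m → Prop
  | .inl _ => True
  | .inr x => x.2 < k x.1

variable {W : Fin m → α} {u : Fin (m - 1) → ℕ → α} {k : Fin (m - 1) → ℕ}

lemma gev_lt (hW : StrictMono W)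
    (hmono : ∀ j i i', i < i' → i' < k j → u j i < u j i')
    (hmem : ∀ j i, i < k j → u j i ∈ Set.Ioo (W (glow j)) (W (ghigh j))) :
    ∀ {x y : Code m}, Supp k x → Supp k y → keyL x < keyL y → gev W u x < gev W u y := by
  rintro (j | ⟨j, i⟩) (j' | ⟨j', i'⟩) hx hy hlt <;>
    simp only [keyL, Prod.Lex.lt_iff, ofLex_toLex] at hlt <;> simp only [gev, Supp] at *
  · rcases hlt with h | h
    · exact hW (by exact_mod_cast Fin.lt_def.2 h)
    · omega
  · rcases hlt with h | ⟨h1, _⟩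
    · calc W j ≤ W (glow j') := hW.monotone (by simp [glow, Fin.le_def]; omega)
        _ < u j' i' := (hmem j' i' hy).1
    · have : j = glow j' := Fin.ext (by simpa [glow] using h1)
      subst this
      exact (hmem j' i' hy).1
  · rcases hlt with h | h
    · calc u j i < W (ghigh j) := (hmem j i hx).2
        _ ≤ W j' := hW.monotone (by simp [ghigh, Fin.le_def]; omega)
    · omega
  · rcases hlt with h | ⟨h1, h2⟩
    · calc u j i < W (ghigh j) := (hmem j i hx).2
        _ ≤ W (glow j') := hW.monotone (by simp [ghigh, glow, Fin.le_def]; omega)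
        _ < u j' i' := (hmem j' i' hy).1
    · have : j = j' := Fin.ext h1
      subst this
      exact hmono j i i' (by omega) hy
lemma gev_le (hW : StrictMono W)
    (hmono : ∀ j i i', i < i' → i' < k j → u j i < u j i')
    (hmem : ∀ j i, i < k j → u j i ∈ Set.Ioo (W (glow j)) (W (ghigh j)))
    {x y : Code m} (hx : Supp k x) (hy : Supp k y) (hle : keyL x ≤ keyL y) :
    gev W u x ≤ gev W u y := by
  rcases eq_or_lt_of_le hle with he | hlt
  · rw [keyL_injective he]
  · exact (gev_lt hW hmono hmem hx hy hlt).le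

end gev


section Rank

variable {α : Type*} [LinearOrder α]

/-- number of elements of `s` below `x`. -/
def rankIn (s : Finset α) (x : α) : ℕ := (s.filter (· < x)).card

lemma rankIn_lt_card {s : Finset α} {x : α} (hx : x ∈ s) : rankIn s x < s.card := by
  apply Finset.card_lt_card
  constructor
  · exact Finset.filter_subset _ _
  · intro hsub
    have := hsub hx
    simp at this

lemma card_filter_lt_fin {k : ℕ} (i : Fin k) :
    (Finset.univ.filter (fun t : Fin k => t < i)).card = i.1 := by
  have : (Finset.univ.filter (fun t : Fin k => t < i)) = Finset.Iio i := by
    ext t; simp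
  rw [this, Fin.card_Iio]

lemma rankIn_orderEmbOfFin {s : Finset α} {k : ℕ} (h : s.card = k) (i : Fin k) :
    rankIn s (s.orderEmbOfFin h i) = i.1 := by
  have himg : s.filter (· < s.orderEmbOfFin h i)
      = (Finset.univ.filter (fun t : Fin k => t < i)).image (s.orderEmbOfFin h) := by
    ext x
    simp only [Finset.mem_filter, Finset.mem_image, Finset.mem_univ, true_and]
    constructor
    · rintro ⟨hxs, hlt⟩
      have : x ∈ Set.range (s.orderEmbOfFin h) := by
        rw [Finset.range_orderEmbOfFin]; exact_mod_cast hxs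
      obtain ⟨t, rfl⟩ := this
      exact ⟨t, (s.orderEmbOfFin h).strictMono.lt_iff_lt.1 hlt, rfl⟩
    · rintro ⟨t, hti, rfl⟩
      exact ⟨Finset.orderEmbOfFin_mem _ _ _, (s.orderEmbOfFin h).strictMono hti⟩
  rw [rankIn, himg, Finset.card_image_of_injective _ (s.orderEmbOfFin h).injective,
    card_filter_lt_fin]

lemma orderEmbOfFin_rankIn {s : Finset α} {k : ℕ} (h : s.card = k) {x : α} (hx : x ∈ s) :
    s.orderEmbOfFin h ⟨rankIn s x, h ▸ rankIn_lt_card hx⟩ = x := by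
  have : x ∈ Set.range (s.orderEmbOfFin h) := by
    rw [Finset.range_orderEmbOfFin]; exact_mod_cast hx
  obtain ⟨t, rfl⟩ := this
  congr 1
  exact Fin.ext (by simp [rankIn_orderEmbOfFin h t])

end Rank

section Pattern

/-- A marked pattern: combinatorial type of an order preserving map. -/
structure Pat (P : Type*) [Fintype P] [PartialOrder P] (A : Set P) (m : ℕ)
    (jd : P → Fin m) where
  k : Fin (m - 1) → ℕ
  c : P → Code m
  kle : ∀ j, k j ≤ Fintype.card P
  mono : ∀ ⦃p q : P⦄, p ≤ q → keyL (c p) ≤ keyL (c q)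
  marked : ∀ a ∈ A, c a = Sum.inl (jd a)
  rng : ∀ j i, (∃ p, c p = Sum.inr (j, i)) ↔ i < k j

lemma Pat.ext' {P : Type*} [Fintype P] [PartialOrder P] {A : Set P} {m : ℕ}
    {jd : P → Fin m} {π π' : Pat P A m jd} (hk : π.k = π'.k) (hc : π.c = π'.c) :
    π = π' := by
  cases π; cases π'; cases hk; cases hc; rfl

variable {P : Type*} [Fintype P] [PartialOrder P]
variable {α : Type*} [LinearOrder α]

def Tset (A : Set P) (μ : P → α) : Set (P → α) :=
  {φ | Monotone φ ∧ ∀ a ∈ A, φ a = μ a}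

variable {m : ℕ}

def gapS (W : Fin m → α) (φ : P → α) (j : Fin (m - 1)) : Finset α :=
  (Finset.univ.image φ).filter fun v => W (glow j) < v ∧ v < W (ghigh j)

def kOf (W : Fin m → α) (φ : P → α) (j : Fin (m - 1)) : ℕ := (gapS W φ j).card

def cOf (hm : 0 < m) (W : Fin m → α) (φ : P → α) (p : P) : Code m :=
  if h : ∃ j, φ p = W j then .inl h.choose
  else if h2 : ∃ j : Fin (m - 1), W (glow j) < φ p ∧ φ p < W (ghigh j) then
    .inr (h2.choose, rankIn (gapS W φ h2.choose) (φ p))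
  else .inl ⟨0, hm⟩

def enum (hm : 0 < m) (W : Fin m → α) (φ : P → α) (j : Fin (m - 1)) (i : ℕ) : α :=
  if hi : i < kOf W φ j then ((gapS W φ j).orderEmbOfFin rfl) ⟨i, hi⟩ else W ⟨0, hm⟩

variable {A : Set P} {jd : P → Fin m} {W : Fin m → α} {φ : P → α}

lemma W_not_mem_gap (hW : StrictMono W) (j' : Fin m) (j : Fin (m - 1)) :
    ¬ (W (glow j) < W j' ∧ W j' < W (ghigh j)) := by
  rintro ⟨h1, h2⟩
  have l1 : (glow j : Fin m) < j' := hW.lt_iff_lt.1 h1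
  have l2 : j' < ghigh j := hW.lt_iff_lt.1 h2
  rw [Fin.lt_def] at l1 l2
  simp [glow, ghigh] at l1 l2
  omega

lemma gap_disjoint (hW : StrictMono W) {x : α} {j j' : Fin (m - 1)}
    (h : W (glow j) < x ∧ x < W (ghigh j)) (h' : W (glow j') < x ∧ x < W (ghigh j')) :
    j = j' := by
  by_contra hne
  have : j.1 < j'.1 ∨ j'.1 < j.1 := by
    rcases Nat.lt_trichotomy j.1 j'.1 with h | h | h
    · exact Or.inl h
    · exact absurd (Fin.ext h) hne
    · exact Or.inr h
  rcases this with hlt | hlt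
  · have : W (ghigh j) ≤ W (glow j') := hW.monotone (by simp [ghigh, glow, Fin.le_def]; omega)
    exact absurd (h.2.trans_le this) (not_lt.2 h'.1.le)
  · have : W (ghigh j') ≤ W (glow j) := hW.monotone (by simp [ghigh, glow, Fin.le_def]; omega)
    exact absurd (h'.2.trans_le this) (not_lt.2 h.1.le)

lemma val_lb (hm : 0 < m) (hW : StrictMono W)
    (hA1 : ∀ p : P, ∃ a ∈ A, a ≤ p)
    (hφ : φ ∈ Tset A fun p => W (jd p)) (p : P) : W ⟨0, hm⟩ ≤ φ p := by
  obtain ⟨a, haA, hap⟩ := hA1 p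
  calc W ⟨0, hm⟩ ≤ W (jd a) := hW.monotone (by simp [Fin.le_def])
    _ = φ a := (hφ.2 a haA).symm
    _ ≤ φ p := hφ.1 hap

lemma val_ub (hm : 0 < m) (hW : StrictMono W)
    (hA2 : ∀ p : P, ∃ a ∈ A, p ≤ a)
    (hφ : φ ∈ Tset A fun p => W (jd p)) (p : P) : φ p ≤ W ⟨m - 1, by omega⟩ := by
  obtain ⟨a, haA, hap⟩ := hA2 p
  calc φ p ≤ φ a := hφ.1 hap
    _ = W (jd a) := hφ.2 a haA
    _ ≤ W ⟨m - 1, by omega⟩ := hW.monotone (by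
        rw [Fin.le_def]
        show (jd a).1 ≤ m - 1
        exact Nat.le_pred_of_lt (jd a).2)

lemma locate (hm : 0 < m) (hW : StrictMono W)
    (hA1 : ∀ p : P, ∃ a ∈ A, a ≤ p) (hA2 : ∀ p : P, ∃ a ∈ A, p ≤ a)
    (hφ : φ ∈ Tset A fun p => W (jd p)) (p : P) :
    (∃ j, φ p = W j) ∨ ∃ j : Fin (m - 1), W (glow j) < φ p ∧ φ p < W (ghigh j) := by
  by_cases h : ∃ j, φ p = W j
  · exact Or.inl h
  refine Or.inr ?_
  push_neg at h
  -- largest index with W j < φ p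
  set S : Finset (Fin m) := Finset.univ.filter (fun j => W j < φ p) with hS
  have h0S : (⟨0, hm⟩ : Fin m) ∈ S := by
    simp only [hS, Finset.mem_filter, Finset.mem_univ, true_and]
    exact lt_of_le_of_ne (val_lb hm hW hA1 hφ p) (fun he => h _ he.symm)
  have hSne : S.Nonempty := ⟨_, h0S⟩
  set j0 := S.max' hSne with hj0
  have hj0S : j0 ∈ S := S.max'_mem hSne
  have hj0lt : W j0 < φ p := by
    have := hj0S; simp only [hS, Finset.mem_filter] at this; exact this.2
  have hj0top : j0.1 < m - 1 := by
    by_contra htop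
    have : j0 = ⟨m - 1, by omega⟩ := Fin.ext (by
      simp only [Fin.val_mk]
      have := j0.2
      omega)
    rw [this] at hj0lt
    exact absurd (val_ub hm hW hA2 hφ p) (not_le.2 hj0lt)
  refine ⟨⟨j0.1, hj0top⟩, ?_, ?_⟩
  · simpa [glow] using hj0lt
  · have hnot : ¬ W (⟨j0.1 + 1, by omega⟩ : Fin m) < φ p := by
      intro hmem
      have h2 : (⟨j0.1 + 1, by omega⟩ : Fin m) ≤ j0 := S.le_max' ⟨j0.1 + 1, by omega⟩
        (by simp only [hS, Finset.mem_filter, Finset.mem_univ, true_and]; exact hmem)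
      rw [Fin.le_def] at h2
      simp only [Fin.val_mk] at h2
      omega
    have he : ghigh (⟨j0.1, hj0top⟩ : Fin (m - 1)) = ⟨j0.1 + 1, by omega⟩ := rfl
    rw [he]
    exact lt_of_le_of_ne (not_lt.1 hnot) (h _)

lemma cOf_of_eq (hm : 0 < m) (hW : StrictMono W) {p : P} {j : Fin m}
    (h : φ p = W j) : cOf hm W φ p = .inl j := by
  rw [cOf, dif_pos ⟨j, h⟩]
  congr 1
  exact hW.injective ((Exists.choose_spec (⟨j, h⟩ : ∃ j, φ p = W j)).symm.trans h)

lemma cOf_of_gap (hm : 0 < m) (hW : StrictMono W) {p : P} {j : Fin (m - 1)}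
    (h : W (glow j) < φ p ∧ φ p < W (ghigh j)) :
    cOf hm W φ p = .inr (j, rankIn (gapS W φ j) (φ p)) := by
  have h1 : ¬ ∃ j', φ p = W j' := by
    rintro ⟨j', hj'⟩
    rw [hj'] at h
    exact W_not_mem_gap hW j' j h
  rw [cOf, dif_neg h1, dif_pos ⟨j, h⟩]
  have hcs := Exists.choose_spec
    (⟨j, h⟩ : ∃ j : Fin (m - 1), W (glow j) < φ p ∧ φ p < W (ghigh j))
  have : (⟨j, h⟩ : ∃ j : Fin (m - 1), W (glow j) < φ p ∧ φ p < W (ghigh j)).choose = j :=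
    gap_disjoint hW hcs h
  rw [this]

lemma mem_gapS_self (hm : 0 < m) {p : P} {j : Fin (m - 1)}
    (h : W (glow j) < φ p ∧ φ p < W (ghigh j)) : φ p ∈ gapS W φ j := by
  simp only [gapS, Finset.mem_filter, Finset.mem_image]
  exact ⟨⟨p, Finset.mem_univ p, rfl⟩, h⟩

lemma gevOf (hm : 0 < m) (hW : StrictMono W)
    (hA1 : ∀ p : P, ∃ a ∈ A, a ≤ p) (hA2 : ∀ p : P, ∃ a ∈ A, p ≤ a)
    (hφ : φ ∈ Tset A fun p => W (jd p)) (p : P) :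
    gev W (enum hm W φ) (cOf hm W φ p) = φ p := by
  rcases locate hm hW hA1 hA2 hφ p with ⟨j, hj⟩ | ⟨j, hj⟩
  · rw [cOf_of_eq hm hW hj, gev, hj]
  · rw [cOf_of_gap hm hW hj]
    have hmem := mem_gapS_self hm (φ := φ) (W := W) hj
    have hlt : rankIn (gapS W φ j) (φ p) < kOf W φ j := rankIn_lt_card hmem
    simp only [gev, enum, dif_pos hlt]
    exact orderEmbOfFin_rankIn rfl hmem

lemma supp_cOf (hm : 0 < m) (hW : StrictMono W)
    (hA1 : ∀ p : P, ∃ a ∈ A, a ≤ p) (hA2 : ∀ p : P, ∃ a ∈ A, p ≤ a)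
    (hφ : φ ∈ Tset A fun p => W (jd p)) (p : P) :
    Supp (kOf W φ) (cOf hm W φ p) := by
  rcases locate hm hW hA1 hA2 hφ p with ⟨j, hj⟩ | ⟨j, hj⟩
  · rw [cOf_of_eq hm hW hj]; trivial
  · rw [cOf_of_gap hm hW hj]
    exact rankIn_lt_card (mem_gapS_self hm hj)

lemma enum_mono (hm : 0 < m) {j : Fin (m - 1)} {i i' : ℕ}
    (h : i < i') (h' : i' < kOf W φ j) :
    enum hm W φ j i < enum hm W φ j i' := by
  rw [enum, enum, dif_pos (h.trans h'), dif_pos h']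
  exact ((gapS W φ j).orderEmbOfFin rfl).strictMono (by simp [Fin.lt_def]; omega)

lemma enum_mem (hm : 0 < m) {j : Fin (m - 1)} {i : ℕ} (h : i < kOf W φ j) :
    enum hm W φ j i ∈ Set.Ioo (W (glow j)) (W (ghigh j)) := by
  rw [enum, dif_pos h]
  have := Finset.orderEmbOfFin_mem (gapS W φ j) rfl ⟨i, h⟩
  simp only [gapS, Finset.mem_filter] at this
  exact ⟨this.2.1, this.2.2⟩

/-- The pattern of an order preserving map. -/
def patOf (hm : 0 < m) (hW : StrictMono W) (jd : P → Fin m)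
    (hA1 : ∀ p : P, ∃ a ∈ A, a ≤ p) (hA2 : ∀ p : P, ∃ a ∈ A, p ≤ a)
    (φ : P → α) (hφ : φ ∈ Tset A fun p => W (jd p)) : Pat P A m jd where
  k := kOf W φ
  c := cOf hm W φ
  kle := fun j => le_trans (Finset.card_le_card (Finset.filter_subset _ _))
    (le_trans Finset.card_image_le (by simp))
  mono := by
    intro p q hpq
    by_contra hk
    have hlt : keyL (cOf hm W φ q) < keyL (cOf hm W φ p) := not_le.1 hk
    have := gev_lt hW (k := kOf W φ) (fun j i i' => enum_mono hm) (fun j i => enum_mem hm)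
      (supp_cOf hm hW hA1 hA2 hφ q) (supp_cOf hm hW hA1 hA2 hφ p) hlt
    rw [gevOf hm hW hA1 hA2 hφ, gevOf hm hW hA1 hA2 hφ] at this
    exact absurd (hφ.1 hpq) (not_le.2 this)
  marked := fun a ha => cOf_of_eq hm hW (hφ.2 a ha)
  rng := by
    intro j i
    constructor
    · rintro ⟨p, hp⟩
      rcases locate hm hW hA1 hA2 hφ p with ⟨j', hj'⟩ | ⟨j', hj'⟩
      · rw [cOf_of_eq hm hW hj'] at hp; exact absurd hp (by simp)
      · rw [cOf_of_gap hm hW hj'] at hp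
        simp only [Sum.inr.injEq, Prod.mk.injEq] at hp
        obtain ⟨rfl, rfl⟩ := hp
        exact rankIn_lt_card (mem_gapS_self hm hj')
    · intro hi
      set x := (gapS W φ j).orderEmbOfFin rfl ⟨i, hi⟩ with hx
      have hxmem : x ∈ gapS W φ j := Finset.orderEmbOfFin_mem _ _ _
      have hxm : ∃ p, φ p = x := by
        have := hxmem
        simp only [gapS, Finset.mem_filter, Finset.mem_image, Finset.mem_univ, true_and] at this
        obtain ⟨⟨p, hp⟩, _⟩ := this
        exact ⟨p, hp⟩
      obtain ⟨p, hp⟩ := hxm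
      have hgap : W (glow j) < φ p ∧ φ p < W (ghigh j) := by
        have := hxmem
        simp only [gapS, Finset.mem_filter] at this
        rw [hp]
        exact this.2
      refine ⟨p, ?_⟩
      rw [cOf_of_gap hm hW hgap, hp]
      congr 2
      rw [hx, rankIn_orderEmbOfFin]

end Pattern

section Count

variable {P : Type*} [Fintype P] [PartialOrder P] {m : ℕ}
variable {A : Set P} {jd : P → Fin m} {W : Fin m → ℤ}

lemma finite_pat (A : Set P) (m : ℕ) (jd : P → Fin m) : Finite (Pat P A m jd) := by
  classical
  let f : Pat P A m jd → ((Fin (m - 1) → ℕ) × (P → Code m)) := fun π => (π.k, π.c)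
  have hinj : Function.Injective f := by
    intro π π' h
    exact Pat.ext' (congrArg Prod.fst h) (congrArg Prod.snd h)
  have hrange : Set.range f ⊆
      (Set.univ.pi fun _ : Fin (m - 1) => Set.Iic (Fintype.card P)) ×ˢ
      (Set.univ.pi fun _ : P =>
        (Sum.inl '' (Set.univ : Set (Fin m))) ∪
        (Sum.inr '' ((Set.univ : Set (Fin (m - 1))) ×ˢ Set.Iic (Fintype.card P)))) := by
    rintro _ ⟨π, rfl⟩
    constructor
    · intro j _
      exact π.kle j
    · intro p _
      show π.c p ∈ _
      rcases hc : π.c p with j | x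
      · exact Or.inl ⟨j, trivial, rfl⟩
      · refine Or.inr ⟨x, ⟨trivial, ?_⟩, rfl⟩
        have h1 := (π.rng x.1 x.2).1 ⟨p, by rw [hc]⟩
        exact le_trans (Nat.le_of_lt h1) (π.kle x.1)
  have hfin : ((Set.univ.pi fun _ : Fin (m - 1) => Set.Iic (Fintype.card P)) ×ˢ
      (Set.univ.pi fun _ : P =>
        (Sum.inl '' (Set.univ : Set (Fin m))) ∪
        (Sum.inr '' ((Set.univ : Set (Fin (m - 1))) ×ˢ Set.Iic (Fintype.card P))))).Finite := by
    refine Set.Finite.prod (Set.Finite.pi fun _ => Set.finite_Iic _)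
      (Set.Finite.pi fun _ => Set.Finite.union ?_ ?_)
    · exact Set.finite_univ.image _
    · exact (Set.finite_univ.prod (Set.finite_Iic _)).image _
  haveI : Finite ↥(Set.range f) := (hfin.subset hrange).to_subtype
  exact Finite.of_injective_finite_range hinj

lemma finite_TZ (hm : 0 < m) (hW : StrictMono W)
    (hA1 : ∀ p : P, ∃ a ∈ A, a ≤ p) (hA2 : ∀ p : P, ∃ a ∈ A, p ≤ a) :
    Finite ↥(Tset A fun p => W (jd p)) := by
  haveI : Finite ↥(Set.Icc (W ⟨0, hm⟩) (W ⟨m - 1, by omega⟩)) :=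
    (Set.finite_Icc _ _).to_subtype
  let F : ↥(Tset A fun p => W (jd p)) →
      (P → ↥(Set.Icc (W ⟨0, hm⟩) (W ⟨m - 1, by omega⟩))) := fun φ p =>
    ⟨φ.1 p, val_lb hm hW hA1 φ.2 p, val_ub hm hW hA2 φ.2 p⟩
  have : Function.Injective F := by
    intro φ ψ h
    exact Subtype.ext (funext fun p => congrArg Subtype.val (congrFun h p))
  exact Finite.of_injective F this

def WIoo (W : Fin m → ℤ) (j : Fin (m - 1)) : Finset ℤ :=
  Finset.Ioo (W (glow j)) (W (ghigh j))

variable (hm : 0 < m)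

def uOf (π : Pat P A m jd)
    (g : ∀ j : Fin (m - 1), {s : Finset ℤ // s ∈ (WIoo W j).powersetCard (π.k j)})
    (j : Fin (m - 1)) (i : ℕ) : ℤ :=
  if hi : i < π.k j then
    (g j).1.orderEmbOfFin ((Finset.mem_powersetCard.1 (g j).2).2) ⟨i, hi⟩
  else W ⟨0, hm⟩

def build (π : Pat P A m jd)
    (g : ∀ j : Fin (m - 1), {s : Finset ℤ // s ∈ (WIoo W j).powersetCard (π.k j)}) :
    P → ℤ := fun p => gev W (uOf hm π g) (π.c p)

variable {π : Pat P A m jd}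
variable {g : ∀ j : Fin (m - 1), {s : Finset ℤ // s ∈ (WIoo W j).powersetCard (π.k j)}}

lemma uOf_mono {j : Fin (m - 1)} {i i' : ℕ} (h : i < i') (h' : i' < π.k j) :
    uOf hm π g j i < uOf hm π g j i' := by
  rw [uOf, uOf, dif_pos (h.trans h'), dif_pos h']
  exact ((g j).1.orderEmbOfFin _).strictMono (by simp [Fin.lt_def]; omega)

lemma uOf_mem {j : Fin (m - 1)} {i : ℕ} (h : i < π.k j) :
    uOf hm π g j i ∈ Set.Ioo (W (glow j)) (W (ghigh j)) := by
  rw [uOf, dif_pos h]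
  have hsub := (Finset.mem_powersetCard.1 (g j).2).1
  have hmem := hsub (Finset.orderEmbOfFin_mem (g j).1
    ((Finset.mem_powersetCard.1 (g j).2).2) ⟨i, h⟩)
  simp only [WIoo, Finset.mem_Ioo] at hmem
  exact hmem

lemma supp_pat (π : Pat P A m jd) (p : P) : Supp π.k (π.c p) := by
  rcases hc : π.c p with j | x
  · trivial
  · exact (π.rng x.1 x.2).1 ⟨p, by rw [hc]⟩

lemma build_mem (hW : StrictMono W) (hA1 : ∀ p : P, ∃ a ∈ A, a ≤ p) (hA2 : ∀ p : P, ∃ a ∈ A, p ≤ a) :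
    build hm π g ∈ Tset A fun p => W (jd p) := by
  constructor
  · intro p q hpq
    exact gev_le hW (fun j i i' => uOf_mono hm) (fun j i => uOf_mem hm)
      (supp_pat π p) (supp_pat π q) (π.mono hpq)
  · intro a ha
    show gev W (uOf hm π g) (π.c a) = W (jd a)
    rw [π.marked a ha]
    rfl

lemma build_gapS (hW : StrictMono W) (j : Fin (m - 1)) :
    gapS W (build hm π g) j = (g j).1 := by
  ext x
  simp only [gapS, Finset.mem_filter, Finset.mem_image, Finset.mem_univ, true_and]
  constructor
  · rintro ⟨⟨p, rfl⟩, hb1, hb2⟩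
    rcases hc : π.c p with j' | ⟨j', i'⟩
    · exfalso
      have : build hm π g p = W j' := by rw [build, hc]; rfl
      rw [this] at hb1 hb2
      exact W_not_mem_gap hW j' j ⟨hb1, hb2⟩
    · have hsupp : i' < π.k j' := by
        have h0 := supp_pat π p
        rw [hc] at h0
        exact h0
      have hval : build hm π g p = uOf hm π g j' i' := by rw [build, hc]; rfl
      have hmm := uOf_mem hm (g := g) hsupp
      have hj : j' = j := by
        apply gap_disjoint hW (x := build hm π g p)
        · rw [hval]; exact ⟨hmm.1, hmm.2⟩
        · exact ⟨hb1, hb2⟩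
      subst hj
      rw [hval, uOf, dif_pos hsupp]
      exact Finset.orderEmbOfFin_mem _ _ _
  · intro hx
    have : x ∈ Set.range ((g j).1.orderEmbOfFin ((Finset.mem_powersetCard.1 (g j).2).2)) := by
      rw [Finset.range_orderEmbOfFin]
      exact_mod_cast hx
    obtain ⟨t, rfl⟩ := this
    obtain ⟨p, hp⟩ := (π.rng j t.1).2 t.2
    have hval : build hm π g p
        = (g j).1.orderEmbOfFin ((Finset.mem_powersetCard.1 (g j).2).2) t := by
      rw [build, hp]
      show uOf hm π g j t.1 = _
      rw [uOf, dif_pos t.2]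
    constructor
    · exact ⟨p, hval⟩
    · have := uOf_mem hm (g := g) t.2 (j := j)
      rw [uOf, dif_pos t.2] at this
      exact ⟨this.1, this.2⟩

lemma patOf_build (hW : StrictMono W) (hA1 : ∀ p : P, ∃ a ∈ A, a ≤ p) (hA2 : ∀ p : P, ∃ a ∈ A, p ≤ a) :
    patOf hm hW jd hA1 hA2 (build hm π g) (build_mem hm hW hA1 hA2) = π := by
  apply Pat.ext'
  · funext j
    show kOf W (build hm π g) j = π.k j
    rw [kOf, build_gapS hm hW]
    exact (Finset.mem_powersetCard.1 (g j).2).2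
  · funext p
    show cOf hm W (build hm π g) p = π.c p
    rcases hc : π.c p with j | ⟨j, i⟩
    · have : build hm π g p = W j := by rw [build, hc]; rfl
      rw [cOf_of_eq hm hW this]
    · have hsupp : i < π.k j := by
        have h0 := supp_pat π p
        rw [hc] at h0
        exact h0
      have hval : build hm π g p = uOf hm π g j i := by rw [build, hc]; rfl
      have hmm := uOf_mem hm (g := g) hsupp
      have hgap : W (glow j) < build hm π g p ∧ build hm π g p < W (ghigh j) := by
        rw [hval]; exact ⟨hmm.1, hmm.2⟩
      rw [cOf_of_gap hm hW hgap]
      congr 1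
      refine Prod.ext rfl ?_
      show rankIn (gapS W (build hm π g) j) (build hm π g p) = i
      rw [build_gapS hm hW, hval, uOf, dif_pos hsupp, rankIn_orderEmbOfFin]

def fibEquiv (hW : StrictMono W) (hA1 : ∀ p : P, ∃ a ∈ A, a ≤ p) (hA2 : ∀ p : P, ∃ a ∈ A, p ≤ a)
    (π : Pat P A m jd) :
    {φ : ↥(Tset A fun p => W (jd p)) // patOf hm hW jd hA1 hA2 φ.1 φ.2 = π} ≃
    (∀ j : Fin (m - 1), {s : Finset ℤ // s ∈ (WIoo W j).powersetCard (π.k j)}) where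
  toFun φ := fun j => ⟨gapS W φ.1.1 j, by
    rw [Finset.mem_powersetCard]
    constructor
    · intro x hx
      simp only [gapS, Finset.mem_filter] at hx
      rw [WIoo, Finset.mem_Ioo]
      exact hx.2
    · have hk := congrArg Pat.k φ.2
      have := congrFun hk j
      exact this⟩
  invFun g := ⟨⟨build hm π g, build_mem hm hW hA1 hA2⟩, patOf_build hm hW hA1 hA2⟩
  left_inv := by
    rintro ⟨⟨φ, hφ⟩, hpat⟩
    apply Subtype.ext
    apply Subtype.ext
    subst hpat
    funext p
    exact gevOf hm hW hA1 hA2 hφ p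
  right_inv := by
    intro g
    funext j
    apply Subtype.ext
    show gapS W (build hm π g) j = (g j).1
    exact build_gapS hm hW j

include hm in
lemma card_Tset (hW : StrictMono W) (hA1 : ∀ p : P, ∃ a ∈ A, a ≤ p) (hA2 : ∀ p : P, ∃ a ∈ A, p ≤ a) :
    Nat.card ↥(Tset A (fun p => W (jd p))) =
      ∑ᶠ π : Pat P A m jd, ∏ j : Fin (m - 1), (WIoo W j).card.choose (π.k j) := by
  haveI := finite_pat A m jd
  haveI : Fintype (Pat P A m jd) := Fintype.ofFinite _
  haveI := finite_TZ (jd := jd) hm hW hA1 hA2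
  haveI : Fintype ↥(Tset A fun p => W (jd p)) := Fintype.ofFinite _
  classical
  rw [finsum_eq_sum_of_fintype]
  rw [Nat.card_eq_fintype_card]
  rw [Fintype.card_congr (Equiv.sigmaFiberEquiv
    (fun φ : ↥(Tset A fun p => W (jd p)) => patOf hm hW jd hA1 hA2 φ.1 φ.2)).symm]
  rw [Fintype.card_sigma]
  congr 1
  funext π
  rw [Fintype.card_congr (fibEquiv hm hW hA1 hA2 π)]
  rw [Fintype.card_pi]
  congr 1
  funext j
  rw [Fintype.card_coe, Finset.card_powersetCard]

end Count

section Poly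

open Polynomial

variable {P : Type*} [Fintype P] [PartialOrder P] {m : ℕ}
variable {A : Set P} {jd : P → Fin m}

/-- one factor of the Ehrhart polynomial -/
def facPoly (δ : ℤ) (k : ℕ) : Polynomial ℝ :=
  Polynomial.C ((k.factorial : ℝ)⁻¹) *
    (descPochhammer ℝ k).comp (Polynomial.C (δ : ℝ) * Polynomial.X - 1)

lemma linear_eq (δ : ℝ) : Polynomial.C δ * Polynomial.X - 1
    = Polynomial.C δ * Polynomial.X + Polynomial.C (-1) := by
  simp [sub_eq_add_neg]

lemma facPoly_natDegree {δ : ℤ} (hδ : 1 ≤ δ) (k : ℕ) : (facPoly δ k).natDegree = k := by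
  have hδ' : ((δ : ℝ)) ≠ 0 := by positivity
  have h1 : (Polynomial.C (δ : ℝ) * Polynomial.X - 1).natDegree = 1 := by
    rw [linear_eq, Polynomial.natDegree_linear hδ']
  rw [facPoly, Polynomial.natDegree_C_mul (by positivity : ((k.factorial : ℝ)⁻¹) ≠ 0),
    Polynomial.natDegree_comp, h1, descPochhammer_natDegree, mul_one]

lemma facPoly_leadingCoeff {δ : ℤ} (hδ : 1 ≤ δ) (k : ℕ) :
    (facPoly δ k).leadingCoeff = (k.factorial : ℝ)⁻¹ * (δ : ℝ) ^ k := by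
  have hδ' : ((δ : ℝ)) ≠ 0 := by positivity
  have h1 : (Polynomial.C (δ : ℝ) * Polynomial.X - 1).natDegree = 1 := by
    rw [linear_eq, Polynomial.natDegree_linear hδ']
  have h2 : (Polynomial.C (δ : ℝ) * Polynomial.X - 1).leadingCoeff = (δ : ℝ) := by
    rw [linear_eq, Polynomial.leadingCoeff_linear hδ']
  rw [facPoly, Polynomial.leadingCoeff_mul, Polynomial.leadingCoeff_C,
    Polynomial.leadingCoeff_comp (by rw [h1]; exact one_ne_zero), h2,
    (monic_descPochhammer ℝ k).leadingCoeff, one_mul, descPochhammer_natDegree]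

lemma facPoly_leadingCoeff_pos {δ : ℤ} (hδ : 1 ≤ δ) (k : ℕ) :
    0 < (facPoly δ k).leadingCoeff := by
  rw [facPoly_leadingCoeff hδ]
  have : (0:ℝ) < (δ:ℝ) := by exact_mod_cast hδ.trans_lt' (by norm_num)
  positivity

lemma facPoly_ne_zero {δ : ℤ} (hδ : 1 ≤ δ) (k : ℕ) : facPoly δ k ≠ 0 :=
  fun h => by simpa [h] using (facPoly_leadingCoeff_pos hδ k).ne'

lemma facPoly_eval {δ : ℤ} (hδ : 1 ≤ δ) (k : ℕ) {n : ℕ} (hn : 0 < n) :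
    (facPoly δ k).eval (n : ℝ) = ((δ * n - 1).toNat.choose k : ℝ) := by
  have hpos : (0:ℤ) ≤ δ * n - 1 := by
    have : (1:ℤ) ≤ n := by exact_mod_cast hn
    nlinarith
  have hcast : ((δ : ℝ) * (n : ℝ) - 1) = (((δ * n - 1).toNat : ℕ) : ℝ) := by
    have h1 : ((δ * n - 1).toNat : ℤ) = δ * n - 1 := Int.toNat_of_nonneg hpos
    calc (δ : ℝ) * (n : ℝ) - 1 = ((δ * n - 1 : ℤ) : ℝ) := by push_cast; ring
      _ = (((δ * n - 1).toNat : ℤ) : ℝ) := by rw [h1]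
      _ = (((δ * n - 1).toNat : ℕ) : ℝ) := by push_cast; rfl
  rw [facPoly, Polynomial.eval_mul, Polynomial.eval_C, Polynomial.eval_comp]
  simp only [Polynomial.eval_sub, Polynomial.eval_mul, Polynomial.eval_C, Polynomial.eval_X,
    Polynomial.eval_one]
  rw [hcast, descPochhammer_eval_eq_descFactorial,
    Nat.descFactorial_eq_factorial_mul_choose]
  push_cast
  rw [← mul_assoc, inv_mul_cancel₀ (by positivity : ((k.factorial : ℝ)) ≠ 0), one_mul]

/-- the Ehrhart-type polynomial attached to a pattern. -/
def patPoly (w : Fin m → ℤ) (π : Pat P A m jd) : Polynomial ℝ :=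
  ∏ j : Fin (m - 1), facPoly (w (ghigh j) - w (glow j)) (π.k j)

variable {w : Fin m → ℤ}

lemma gapLen_pos (hw : StrictMono w) (j : Fin (m - 1)) : 1 ≤ w (ghigh j) - w (glow j) := by
  have : w (glow j) < w (ghigh j) := hw (by simp [glow, ghigh, Fin.lt_def])
  omega

lemma patPoly_natDegree (hw : StrictMono w) (π : Pat P A m jd) :
    (patPoly w π).natDegree = ∑ j : Fin (m - 1), π.k j := by
  rw [patPoly, Polynomial.natDegree_prod _ _ (fun j _ => facPoly_ne_zero (gapLen_pos hw j) _)]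
  exact Finset.sum_congr rfl fun j _ => facPoly_natDegree (gapLen_pos hw j) _

lemma patPoly_leadingCoeff_pos (hw : StrictMono w) (π : Pat P A m jd) :
    0 < (patPoly w π).leadingCoeff := by
  rw [patPoly, Polynomial.leadingCoeff_prod]
  exact Finset.prod_pos fun j _ => facPoly_leadingCoeff_pos (gapLen_pos hw j) _

lemma patPoly_eval (hw : StrictMono w) (π : Pat P A m jd) {n : ℕ} (hn : 0 < n) :
    (patPoly w π).eval (n : ℝ) =
      ∏ j : Fin (m - 1),
        ((WIoo (fun i => (n : ℤ) * w i) j).card.choose (π.k j) : ℝ) := by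
  rw [patPoly, Polynomial.eval_prod]
  refine Finset.prod_congr rfl fun j _ => ?_
  rw [facPoly_eval (gapLen_pos hw j) _ hn]
  congr 2
  rw [WIoo, Int.card_Ioo]
  congr 1
  ring

end Poly

section Geom

variable {P : Type*} [Fintype P] [PartialOrder P] {m : ℕ}
variable {A : Set P} {jd : P → Fin m} {Wr : Fin m → ℝ}

/-- canonical realization values of a pattern -/
def u0 (π : Pat P A m jd) (Wr : Fin m → ℝ) (j : Fin (m - 1)) (i : ℕ) : ℝ :=
  Wr (glow j) + (i + 1) * ((Wr (ghigh j) - Wr (glow j)) / (π.k j + 1))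

lemma gapR_pos (hWr : StrictMono Wr) (j : Fin (m - 1)) :
    0 < Wr (ghigh j) - Wr (glow j) :=
  sub_pos.2 (hWr (by simp [glow, ghigh, Fin.lt_def]))

lemma u0_mono (π : Pat P A m jd) (hWr : StrictMono Wr) {j : Fin (m - 1)} {i i' : ℕ}
    (h : i < i') (h' : i' < π.k j) : u0 π Wr j i < u0 π Wr j i' := by
  have hstep : 0 < (Wr (ghigh j) - Wr (glow j)) / (π.k j + 1) := by
    have := gapR_pos hWr j
    positivity
  have : ((i : ℝ) + 1) < ((i' : ℝ) + 1) := by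
    have : (i : ℝ) < i' := by exact_mod_cast h
    linarith
  unfold u0
  nlinarith [hstep, this]

lemma u0_mem (π : Pat P A m jd) (hWr : StrictMono Wr) {j : Fin (m - 1)} {i : ℕ}
    (h : i < π.k j) : u0 π Wr j i ∈ Set.Ioo (Wr (glow j)) (Wr (ghigh j)) := by
  have hgap := gapR_pos hWr j
  have hstep : 0 < (Wr (ghigh j) - Wr (glow j)) / (π.k j + 1) := by positivity
  constructor
  · unfold u0
    nlinarith
  · unfold u0
    have hle : ((i : ℝ) + 1) ≤ (π.k j : ℝ) := by exact_mod_cast h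
    have hkey : ((i : ℝ) + 1) * ((Wr (ghigh j) - Wr (glow j)) / (π.k j + 1))
        < ((π.k j : ℝ) + 1) * ((Wr (ghigh j) - Wr (glow j)) / (π.k j + 1)) := by
      apply mul_lt_mul_of_pos_right _ hstep
      linarith
    have hcancel : ((π.k j : ℝ) + 1) * ((Wr (ghigh j) - Wr (glow j)) / (π.k j + 1))
        = Wr (ghigh j) - Wr (glow j) := by
      field_simp
    linarith [hkey, hcancel.le]

/-- bumped realization -/
def u1 (π : Pat P A m jd) (Wr : Fin m → ℝ) (x : Σ j : Fin (m - 1), Fin (π.k j))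
    (j : Fin (m - 1)) (i : ℕ) : ℝ :=
  u0 π Wr j i +
    if j = x.1 ∧ i = x.2.1 then (Wr (ghigh x.1) - Wr (glow x.1)) / (π.k x.1 + 1) / 2 else 0

lemma u0_succ (π : Pat P A m jd) (j : Fin (m - 1)) (i : ℕ) :
    u0 π Wr j (i + 1) = u0 π Wr j i + (Wr (ghigh j) - Wr (glow j)) / (π.k j + 1) := by
  unfold u0
  push_cast
  ring

lemma u1_mono (π : Pat P A m jd) (hWr : StrictMono Wr)
    (x : Σ j : Fin (m - 1), Fin (π.k j)) {j : Fin (m - 1)} {i i' : ℕ}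
    (h : i < i') (h' : i' < π.k j) : u1 π Wr x j i < u1 π Wr x j i' := by
  have hstep : 0 < (Wr (ghigh j) - Wr (glow j)) / (π.k j + 1) := by
    have := gapR_pos hWr j
    positivity
  have hxnn : (0:ℝ) ≤ (Wr (ghigh x.1) - Wr (glow x.1)) / (π.k x.1 + 1) / 2 := by
    have := gapR_pos hWr x.1
    positivity
  unfold u1
  by_cases hcond : j = x.1 ∧ i = x.2.1
  · rw [if_pos hcond, if_neg (by
      rintro ⟨-, hi'⟩
      exact absurd (hcond.2.trans hi'.symm) h.ne)]
    have hbump : (Wr (ghigh x.1) - Wr (glow x.1)) / (π.k x.1 + 1) / 2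
        = (Wr (ghigh j) - Wr (glow j)) / (π.k j + 1) / 2 := by rw [hcond.1]
    have h1 : u0 π Wr j i + (Wr (ghigh j) - Wr (glow j)) / (π.k j + 1) ≤ u0 π Wr j i' := by
      rw [← u0_succ]
      rcases Nat.lt_or_ge (i + 1) i' with hlt | hge
      · exact (u0_mono π hWr hlt h').le
      · have : i' = i + 1 := by omega
        rw [this]
    rw [hbump]
    linarith
  · rw [if_neg hcond]
    have hbase := u0_mono π hWr h h'
    by_cases hcond' : j = x.1 ∧ i' = x.2.1
    · rw [if_pos hcond']
      linarith
    · rw [if_neg hcond']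
      linarith

lemma u1_mem (π : Pat P A m jd) (hWr : StrictMono Wr)
    (x : Σ j : Fin (m - 1), Fin (π.k j)) {j : Fin (m - 1)} {i : ℕ}
    (h : i < π.k j) : u1 π Wr x j i ∈ Set.Ioo (Wr (glow j)) (Wr (ghigh j)) := by
  have hgap := gapR_pos hWr j
  have hstep : 0 < (Wr (ghigh j) - Wr (glow j)) / (π.k j + 1) := by positivity
  have hu0 := u0_mem π hWr (Wr := Wr) h
  unfold u1
  by_cases hcond : j = x.1 ∧ i = x.2.1
  · rw [if_pos hcond]
    have hbump : (Wr (ghigh x.1) - Wr (glow x.1)) / (π.k x.1 + 1) / 2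
        = (Wr (ghigh j) - Wr (glow j)) / (π.k j + 1) / 2 := by rw [hcond.1]
    rw [hbump]
    constructor
    · linarith [hu0.1]
    · have hle : ((i : ℝ) + 1) ≤ (π.k j : ℝ) := by exact_mod_cast h
      have hcancel : ((π.k j : ℝ) + 1) * ((Wr (ghigh j) - Wr (glow j)) / (π.k j + 1))
          = Wr (ghigh j) - Wr (glow j) := by field_simp
      unfold u0
      nlinarith
  · rw [if_neg hcond, add_zero]
    exact hu0

lemma sigma_fin_eq {n : ℕ} {k : Fin n → ℕ} {x y : Σ j : Fin n, Fin (k j)}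
    (h1 : x.1 = y.1) (h2 : x.2.1 = y.2.1) : x = y := by
  obtain ⟨a, b⟩ := x
  obtain ⟨c, d⟩ := y
  simp only at h1
  subst h1
  simp only at h2
  exact congrArg _ (Fin.ext h2)

/-- indicator of the set where the pattern code equals `inr (x.1, x.2.1)` -/
def chi (π : Pat P A m jd) (x : Σ j : Fin (m - 1), Fin (π.k j)) : P → ℝ :=
  fun p => if π.c p = Sum.inr (x.1, x.2.1) then 1 else 0

lemma real_build_mem (hWr : StrictMono Wr) (π : Pat P A m jd)
    {u : Fin (m - 1) → ℕ → ℝ}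
    (hmono : ∀ j i i', i < i' → i' < π.k j → u j i < u j i')
    (hmem : ∀ j i, i < π.k j → u j i ∈ Set.Ioo (Wr (glow j)) (Wr (ghigh j))) :
    (fun p => gev Wr u (π.c p)) ∈ Tset A fun p => Wr (jd p) := by
  constructor
  · intro p q hpq
    exact gev_le hWr hmono hmem (supp_pat π p) (supp_pat π q) (π.mono hpq)
  · intro a ha
    show gev Wr u (π.c a) = Wr (jd a)
    rw [π.marked a ha]
    rfl

lemma pat_card_le_finrank (hWr : StrictMono Wr) (π : Pat P A m jd) :
    ∑ j : Fin (m - 1), π.k j ≤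
      Module.finrank ℝ (affineSpan ℝ (Tset A fun p => Wr (jd p))).direction := by
  classical
  set O := Tset A fun p => Wr (jd p) with hO
  set D := (affineSpan ℝ O).direction with hD
  set φ0 : P → ℝ := fun p => gev Wr (u0 π Wr) (π.c p) with hφ0def
  have hφ0 : φ0 ∈ O := real_build_mem hWr π
    (fun j i i' => u0_mono π hWr) (fun j i => u0_mem π hWr)
  have hchiD : ∀ x : Σ j : Fin (m - 1), Fin (π.k j), chi π x ∈ D := by
    intro x
    set φ1 : P → ℝ := fun p => gev Wr (u1 π Wr x) (π.c p) with hφ1def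
    have hφ1 : φ1 ∈ O := real_build_mem hWr π
      (fun j i i' => u1_mono π hWr x) (fun j i => u1_mem π hWr x)
    have hstep : 0 < (Wr (ghigh x.1) - Wr (glow x.1)) / (π.k x.1 + 1) / 2 := by
      have := gapR_pos hWr x.1
      positivity
    have hdiff : φ1 - φ0
        = ((Wr (ghigh x.1) - Wr (glow x.1)) / (π.k x.1 + 1) / 2) • chi π x := by
      funext p
      simp only [Pi.sub_apply, Pi.smul_apply, smul_eq_mul, hφ0def, hφ1def, chi]
      rcases hc : π.c p with j | ⟨j, i⟩
      · simp only [gev]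
        rw [if_neg (by simp)]
        ring
      · simp only [gev, u1]
        by_cases hcond : j = x.1 ∧ i = x.2.1
        · obtain ⟨h1, h2⟩ := hcond
          subst h1; subst h2
          rw [if_pos ⟨rfl, rfl⟩, if_pos rfl]
          ring
        · rw [if_neg hcond, if_neg (by
            intro hcc
            apply hcond
            injection hcc with hcc'
            exact ⟨congrArg Prod.fst hcc', congrArg Prod.snd hcc'⟩)]
          ring
    have hsub : φ1 - φ0 ∈ D := by
      rw [hD]
      exact AffineSubspace.vsub_mem_direction (subset_affineSpan ℝ O hφ1)
        (subset_affineSpan ℝ O hφ0)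
    have : chi π x = ((Wr (ghigh x.1) - Wr (glow x.1)) / (π.k x.1 + 1) / 2)⁻¹ • (φ1 - φ0) := by
      rw [hdiff, smul_smul, inv_mul_cancel₀ hstep.ne', one_smul]
    rw [this]
    exact D.smul_mem _ hsub
  -- linear independence
  have hLI : LinearIndependent ℝ (fun x : Σ j : Fin (m - 1), Fin (π.k j) => chi π x) := by
    rw [Fintype.linearIndependent_iff]
    intro g hg x
    obtain ⟨p, hp⟩ := (π.rng x.1 x.2.1).2 x.2.2
    have hfp := congrFun hg p
    simp only [Finset.sum_apply, Pi.smul_apply, smul_eq_mul, Pi.zero_apply] at hfp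
    rw [Finset.sum_eq_single x] at hfp
    · simpa [chi, hp] using hfp
    · intro y _ hyx
      simp only [chi, hp]
      rw [if_neg, mul_zero]
      intro hcc
      injection hcc with hcc'
      exact hyx (sigma_fin_eq (congrArg Prod.fst hcc') (congrArg Prod.snd hcc')).symm
    · intro hx
      exact absurd (Finset.mem_univ x) hx
  haveI : Module.Finite ℝ ↥D := inferInstance
  let chiD : (Σ j : Fin (m - 1), Fin (π.k j)) → ↥D := fun x => ⟨chi π x, hchiD x⟩
  have hcomp : (⇑D.subtype) ∘ chiD = fun x => chi π x := rfl
  have hLI2 : LinearIndependent ℝ chiD :=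
    LinearIndependent.of_comp D.subtype (by rw [hcomp]; exact hLI)
  have hcard := hLI2.fintype_card_le_finrank
  simpa using hcard
  
lemma exists_maximizer (hO : (Tset A fun p => Wr (jd p)).Nonempty) :
    ∃ φs ∈ (Tset A fun p => Wr (jd p)),
      ∀ ψ ∈ (Tset A fun p => Wr (jd p)),
        (Finset.univ.image ψ).card ≤ (Finset.univ.image φs).card := by
  classical
  set O := Tset A fun p => Wr (jd p) with hOdef
  set S : Set ℕ := (fun φ : P → ℝ => (Finset.univ.image φ).card) '' O with hS
  have hSne : S.Nonempty := hO.image _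
  have hbdd : BddAbove S := by
    refine ⟨Fintype.card P, ?_⟩
    rintro _ ⟨φ, hφ, rfl⟩
    exact le_trans Finset.card_image_le (by simp)
  obtain ⟨φs, hφsO, hval⟩ := Nat.sSup_mem hSne hbdd
  refine ⟨φs, hφsO, fun ψ hψ => ?_⟩
  have hval' : (Finset.univ.image φs).card = sSup S := hval
  rw [hval']
  exact le_csSup hbdd ⟨ψ, hψ, rfl⟩

lemma maximizer_resp {φs : P → ℝ} (hφs : φs ∈ (Tset A fun p => Wr (jd p)))
    (hmax : ∀ ψ ∈ (Tset A fun p => Wr (jd p)),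
      (Finset.univ.image ψ).card ≤ (Finset.univ.image φs).card) :
    ∀ ψ ∈ (Tset A fun p => Wr (jd p)), ∀ p q, φs p = φs q → ψ p = ψ q := by
  classical
  intro ψ hψ p q hpq
  by_contra hne
  set E : Finset ℝ := (Finset.univ ×ˢ Finset.univ : Finset (P × P)).image
    (fun z => -(φs z.1 - φs z.2) / ((ψ z.1 - ψ z.2) - (φs z.1 - φs z.2))) with hE
  have hIoo : (Set.Ioo (0:ℝ) 1 \ (E : Set ℝ)).Nonempty :=
    ((Set.Ioo_infinite one_pos).diff E.finite_toSet).nonempty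
  obtain ⟨ε, ⟨hε0, hε1⟩, hεE⟩ := hIoo
  set χ : P → ℝ := fun r => (1 - ε) * φs r + ε * ψ r with hχ
  have hχO : χ ∈ (Tset A fun p => Wr (jd p)) := by
    constructor
    · intro r s hrs
      have h1 : φs r ≤ φs s := hφs.1 hrs
      have h2 : ψ r ≤ ψ s := hψ.1 hrs
      have e0 : (0:ℝ) ≤ ε := hε0.le
      have e1 : (0:ℝ) ≤ 1 - ε := by linarith
      simp only [hχ]
      nlinarith
    · intro a ha
      simp only [hχ, hφs.2 a ha, hψ.2 a ha]
      ring
  have hpres : ∀ x y : P, χ x = χ y → φs x = φs y := by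
    intro x y hxy
    by_contra hne2
    have hkey : (φs x - φs y) + ε * ((ψ x - ψ y) - (φs x - φs y)) = 0 := by
      simp only [hχ] at hxy
      nlinarith [hxy]
    rcases eq_or_ne ((ψ x - ψ y) - (φs x - φs y)) 0 with hc | hc
    · rw [hc, mul_zero, add_zero, sub_eq_zero] at hkey
      exact hne2 hkey
    · have hε : ε = -(φs x - φs y) / ((ψ x - ψ y) - (φs x - φs y)) := by
        field_simp
        linarith [hkey]
      apply hεE
      rw [hε]
      exact_mod_cast Finset.mem_image.2 ⟨(x, y), by simp, rfl⟩
  have hsplit : χ p ≠ χ q := by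
    simp only [hχ, hpq]
    intro hcc
    apply hne
    have h3 : ε * (ψ p - ψ q) = 0 := by linarith
    rcases mul_eq_zero.1 h3 with h | h
    · exact absurd h hε0.ne'
    · linarith
  set Iφ := Finset.univ.image φs with hIφ
  set Iχ := Finset.univ.image χ with hIχ
  set f : ℝ → ℝ := fun v => if h : ∃ r, φs r = v then χ h.choose else 0 with hf
  have hfspec : ∀ v ∈ Iφ, ∃ r : P, φs r = v ∧ f v = χ r := by
    intro v hv
    rw [hIφ, Finset.mem_image] at hv
    obtain ⟨r, _, hr⟩ := hv
    have hex : ∃ r, φs r = v := ⟨r, hr⟩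
    exact ⟨hex.choose, hex.choose_spec, by rw [hf]; simp only [dif_pos hex]⟩
  have hmapsto : ∀ v ∈ Iφ, f v ∈ Iχ := by
    intro v hv
    obtain ⟨r, _, hfr⟩ := hfspec v hv
    rw [hfr, hIχ, Finset.mem_image]
    exact ⟨r, Finset.mem_univ r, rfl⟩
  have hinj : Set.InjOn f ↑Iφ := by
    intro u hu v hv huv
    obtain ⟨r, hru, hfu⟩ := hfspec u hu
    obtain ⟨t, htv, hfv⟩ := hfspec v hv
    rw [hfu, hfv] at huv
    rw [← hru, ← htv]
    exact hpres r t huv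
  have hne2 : ∃ t ∈ Iχ, t ∉ Iφ.image f := by
    by_contra hall
    push_neg at hall
    have hp' : χ p ∈ Iχ := Finset.mem_image.2 ⟨p, Finset.mem_univ p, rfl⟩
    have hq' : χ q ∈ Iχ := Finset.mem_image.2 ⟨q, Finset.mem_univ q, rfl⟩
    obtain ⟨v, hv, hvp⟩ := Finset.mem_image.1 (hall _ hp')
    obtain ⟨v', hv', hvq⟩ := Finset.mem_image.1 (hall _ hq')
    obtain ⟨r, hru, hfu⟩ := hfspec v hv
    obtain ⟨t, htv, hfv⟩ := hfspec v' hv'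
    have hvp' : χ r = χ p := by rw [← hfu]; exact hvp
    have hvq' : χ t = χ q := by rw [← hfv]; exact hvq
    have h1 : v = φs p := by rw [← hru]; exact hpres r p hvp'
    have h2 : v' = φs q := by rw [← htv]; exact hpres t q hvq'
    have hvv : v = v' := by rw [h1, h2, hpq]
    have hft : χ r = χ t := by rw [← hfu, ← hfv, hvv]
    apply hsplit
    rw [← hvp', ← hvq', hft]
  obtain ⟨t, htχ, htf⟩ := hne2
  have hssub : Iφ.image f ⊂ Iχ := by
    constructor
    · intro y hy
      obtain ⟨v, hv, rfl⟩ := Finset.mem_image.1 hy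
      exact hmapsto v hv
    · intro hsub
      exact htf (hsub htχ)
  have hlt : Iφ.card < Iχ.card := by
    calc Iφ.card = (Iφ.image f).card := (Finset.card_image_of_injOn hinj).symm
      _ < Iχ.card := Finset.card_lt_card hssub
  exact absurd (hmax χ hχO) (not_le.2 hlt)

lemma finrank_le_of_maximizer (hm : 0 < m) (hWr : StrictMono Wr)
    (hA1 : ∀ p : P, ∃ a ∈ A, a ≤ p) (hA2 : ∀ p : P, ∃ a ∈ A, p ≤ a)
    (hsurj : ∀ j : Fin m, ∃ a ∈ A, jd a = j)
    {φs : P → ℝ} (hφs : φs ∈ (Tset A fun p => Wr (jd p)))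
    (hresp : ∀ ψ ∈ (Tset A fun p => Wr (jd p)), ∀ p q, φs p = φs q → ψ p = ψ q) :
    Module.finrank ℝ (affineSpan ℝ (Tset A fun p => Wr (jd p))).direction ≤
      ∑ j : Fin (m - 1), kOf Wr φs j := by
  classical
  set O := Tset A fun p => Wr (jd p) with hOdef
  set W0 : Submodule ℝ (P → ℝ) :=
  { carrier := {χ | (∀ p q, φs p = φs q → χ p = χ q) ∧ ∀ p j, φs p = Wr j → χ p = 0}
    add_mem' := by
      rintro χ₁ χ₂ ⟨h1, h2⟩ ⟨h3, h4⟩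
      constructor
      · intro p q h
        simp only [Pi.add_apply, h1 p q h, h3 p q h]
      · intro p j h
        simp only [Pi.add_apply, h2 p j h, h4 p j h, add_zero]
    zero_mem' := by
      constructor
      · intro p q _
        rfl
      · intro p j _
        rfl
    smul_mem' := by
      rintro c χ ⟨h1, h2⟩
      constructor
      · intro p q h
        simp only [Pi.smul_apply, h1 p q h]
      · intro p j h
        simp only [Pi.smul_apply, h2 p j h, smul_zero] } with hW0
  have hsubset : O ⊆ (AffineSubspace.mk' φs W0 : Set (P → ℝ)) := by
    intro ψ hψ
    rw [AffineSubspace.mem_coe, AffineSubspace.mem_mk']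
    constructor
    · intro p q h
      show ψ p - φs p = ψ q - φs q
      rw [hresp ψ hψ p q h, h]
    · intro p j h
      show ψ p - φs p = 0
      obtain ⟨a, haA, rfl⟩ := hsurj j
      have hφa : φs a = Wr (jd a) := hφs.2 a haA
      have hppa : ψ p = ψ a := hresp ψ hψ p a (by rw [h, hφa])
      rw [hppa, hψ.2 a haA, h, sub_self]
  have hdir : (affineSpan ℝ O).direction ≤ W0 := by
    have h1 : affineSpan ℝ O ≤ AffineSubspace.mk' φs W0 := by
      rw [affineSpan_le]
      exact hsubset
    have h2 := AffineSubspace.direction_le h1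
    rwa [AffineSubspace.direction_mk'] at h2
  set wit : (Σ j : Fin (m - 1), Fin (kOf Wr φs j)) → P := fun x =>
    (((patOf hm hWr jd hA1 hA2 φs hφs).rng x.1 x.2.1).2 x.2.2).choose with hwit
  have hwitspec : ∀ x : Σ j : Fin (m - 1), Fin (kOf Wr φs j),
      cOf hm Wr φs (wit x) = Sum.inr (x.1, x.2.1) := fun x =>
    (((patOf hm hWr jd hA1 hA2 φs hφs).rng x.1 x.2.1).2 x.2.2).choose_spec
  set T : W0 →ₗ[ℝ] ((Σ j : Fin (m - 1), Fin (kOf Wr φs j)) → ℝ) :=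
  { toFun := fun χ x => χ.1 (wit x)
    map_add' := fun χ₁ χ₂ => rfl
    map_smul' := fun c χ => rfl } with hT
  have hTinj : Function.Injective T := by
    rw [injective_iff_map_eq_zero]
    intro χ hχ0
    apply Subtype.ext
    funext p
    show χ.1 p = 0
    rcases locate hm hWr hA1 hA2 hφs p with ⟨j, hj⟩ | ⟨j, hj⟩
    · exact χ.2.2 p j hj
    · have hrank : rankIn (gapS Wr φs j) (φs p) < kOf Wr φs j :=
        rankIn_lt_card (mem_gapS_self hm hj)
      set x : Σ j : Fin (m - 1), Fin (kOf Wr φs j) := ⟨j, ⟨_, hrank⟩⟩ with hx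
      have hcp : cOf hm Wr φs p = Sum.inr (x.1, x.2.1) := cOf_of_gap hm hWr hj
      have hval : φs p = φs (wit x) := by
        have e1 := gevOf hm hWr hA1 hA2 hφs p
        have e2 := gevOf hm hWr hA1 hA2 hφs (wit x)
        rw [hcp] at e1
        rw [hwitspec x] at e2
        rw [← e1, ← e2]
      have hzz := χ.2.1 p (wit x) hval
      rw [hzz]
      exact congrFun hχ0 x
  haveI : Module.Finite ℝ ((Σ j : Fin (m - 1), Fin (kOf Wr φs j)) → ℝ) := inferInstance
  calc Module.finrank ℝ (affineSpan ℝ O).direction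
      ≤ Module.finrank ℝ W0 := Submodule.finrank_mono hdir
    _ ≤ Module.finrank ℝ ((Σ j : Fin (m - 1), Fin (kOf Wr φs j)) → ℝ) :=
        LinearMap.finrank_le_finrank_of_injective hTinj
    _ = ∑ j : Fin (m - 1), kOf Wr φs j := by
        rw [Module.finrank_fintype_fun_eq_card]
        simp

lemma Tset_nonempty (hA1 : ∀ p : P, ∃ a ∈ A, a ≤ p)
    (hcomp : ∀ a ∈ A, ∀ b ∈ A, a ≤ b → Wr (jd a) ≤ Wr (jd b)) :
    (Tset A fun p => Wr (jd p)).Nonempty := by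
  classical
  set L : P → Finset P := fun p => Finset.univ.filter (fun a => a ∈ A ∧ a ≤ p) with hL
  have hLne : ∀ p, ((L p).image (fun a => Wr (jd a))).Nonempty := by
    intro p
    obtain ⟨a, ha, hap⟩ := hA1 p
    exact ⟨Wr (jd a), Finset.mem_image_of_mem _ (by simp [hL, ha, hap])⟩
  refine ⟨fun p => ((L p).image (fun a => Wr (jd a))).max' (hLne p), ?_, ?_⟩
  · intro p q hpq
    apply Finset.max'_le
    intro y hy
    obtain ⟨a, haL, rfl⟩ := Finset.mem_image.1 hy
    apply Finset.le_max'
    apply Finset.mem_image_of_mem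
    simp only [hL, Finset.mem_filter, Finset.mem_univ, true_and] at haL ⊢
    exact ⟨haL.1, haL.2.trans hpq⟩
  · intro a ha
    apply le_antisymm
    · apply Finset.max'_le
      intro y hy
      obtain ⟨b, hbL, rfl⟩ := Finset.mem_image.1 hy
      simp only [hL, Finset.mem_filter, Finset.mem_univ, true_and] at hbL
      exact hcomp b hbL.1 a ha hbL.2
    · apply Finset.le_max'
      exact Finset.mem_image_of_mem _ (by simp [hL, ha])

end Geom

end MOP

/-- The marked order polytope `O_{P,A}(λ)`: order preserving maps `P → ℝ`
agreeing with `lam` on the marked subset `A`. -/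
def markedOrderPolytope (P : Type*) [PartialOrder P] (A : Set P) (lam : P → ℝ) :
    Set (P → ℝ) :=
  {φ | Monotone φ ∧ ∀ a ∈ A, φ a = lam a}

/-- `O_{P,A}(nλ) = n · O_{P,A}(λ)` for all positive integers `n`, and
`n ↦ Ω_{P,A}(nλ)` agrees for positive integers `n` with a polynomial of degree
`dim O_{P,A}(λ)`, i.e. it is the Ehrhart polynomial of `O_{P,A}(λ)`. -/
theorem stmt4 (P : Type*) [Fintype P] [PartialOrder P] (A : Set P)
    (hmin : ∀ p : P, IsMin p → p ∈ A) (hmax : ∀ p : P, IsMax p → p ∈ A)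
    (lam : P → ℤ) (hlam : ∀ a ∈ A, ∀ b ∈ A, a ≤ b → lam a ≤ lam b) :
    (∀ n : ℕ, 0 < n →
      markedOrderPolytope P A (fun p => (((n : ℤ) * lam p : ℤ) : ℝ)) =
        (n : ℝ) • markedOrderPolytope P A (fun p => (lam p : ℝ))) ∧
    ∃ q : Polynomial ℝ,
      q.natDegree =
        Module.finrank ℝ
          (affineSpan ℝ (markedOrderPolytope P A (fun p => (lam p : ℝ)))).direction ∧
      ∀ n : ℕ, 0 < n →
        q.eval (n : ℝ) =
          Nat.card {φ : P → ℤ | Monotone φ ∧ ∀ a ∈ A, φ a = (n : ℤ) * lam a} := by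
  classical
  constructor
  · -- dilation property
    intro n hn
    have hn' : (0:ℝ) < (n:ℝ) := by exact_mod_cast hn
    ext φ
    constructor
    · intro hφ
      rw [Set.mem_smul_set]
      refine ⟨fun p => ((n:ℝ))⁻¹ * φ p, ⟨?_, ?_⟩, ?_⟩
      · intro p q hpq
        exact mul_le_mul_of_nonneg_left (hφ.1 hpq) (by positivity)
      · intro a ha
        have h2 : φ a = (((n : ℤ) * lam a : ℤ) : ℝ) := hφ.2 a ha
        show ((n:ℝ))⁻¹ * φ a = ((lam a : ℤ) : ℝ)
        rw [h2]
        push_cast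
        field_simp
      · funext p
        show (n:ℝ) * (((n:ℝ))⁻¹ * φ p) = φ p
        field_simp
    · intro hφ
      rw [Set.mem_smul_set] at hφ
      obtain ⟨f, hf, rfl⟩ := hφ
      constructor
      · intro p q hpq
        show (n:ℝ) * f p ≤ (n:ℝ) * f q
        exact mul_le_mul_of_nonneg_left (hf.1 hpq) hn'.le
      · intro a ha
        show (n:ℝ) * f a = _
        rw [hf.2 a ha]
        push_cast
        ring
  · rcases isEmpty_or_nonempty P with hP | hP
    · -- empty poset
      refine ⟨1, ?_, ?_⟩
      · rw [Polynomial.natDegree_one]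
        have h0 : Module.finrank ℝ (P → ℝ) = 0 := by
          rw [Module.finrank_fintype_fun_eq_card]
          simp
        have h1 := Submodule.finrank_le
          (affineSpan ℝ (markedOrderPolytope P A fun p => (lam p : ℝ))).direction
        omega
      · intro n hn
        rw [Polynomial.eval_one]
        have hset : {φ : P → ℤ | Monotone φ ∧ ∀ a ∈ A, φ a = (n:ℤ) * lam a}
            = Set.univ := by
          ext φ
          simp only [Set.mem_setOf_eq, Set.mem_univ, iff_true]
          exact ⟨fun p _ _ => isEmptyElim p, fun a _ => isEmptyElim a⟩
        rw [hset]
        haveI : Unique (P → ℤ) :=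
          ⟨⟨fun p => isEmptyElim p⟩, fun f => funext fun p => isEmptyElim p⟩
        have hcard : Nat.card ↥(Set.univ : Set (P → ℤ)) = 1 := by
          rw [Nat.card_congr (Equiv.Set.univ (P → ℤ))]
          exact Nat.card_unique
        rw [hcard]
        norm_num
    · -- nonempty poset
      have hA1 : ∀ p : P, ∃ a ∈ A, a ≤ p := by
        intro p
        obtain ⟨b, hle, hb⟩ := exists_minimal_le_of_wellFoundedLT (fun _ : P => True) p trivial
        exact ⟨b, hmin b (fun y hy => hb.2 trivial hy), hle⟩
      have hA2 : ∀ p : P, ∃ a ∈ A, p ≤ a := by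
        intro p
        obtain ⟨b, hle, hb⟩ := Finite.exists_le_maximal (p := fun _ : P => True) trivial
        exact ⟨b, hmax b (fun y hy => hb.2 trivial hy), hle⟩
      set Avals : Finset ℤ := (Finset.univ.filter (fun a => a ∈ A)).image lam with hAvals
      have hAvalsmem : ∀ a ∈ A, lam a ∈ Avals := fun a ha =>
        Finset.mem_image_of_mem _ (Finset.mem_filter.2 ⟨Finset.mem_univ _, ha⟩)
      have hAne : Avals.Nonempty := by
        obtain ⟨a, ha, _⟩ := hA1 (Classical.arbitrary P)
        exact ⟨lam a, hAvalsmem a ha⟩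
      set m := Avals.card with hmdef
      have hm : 0 < m := Finset.card_pos.2 hAne
      set w : Fin m → ℤ := fun j => Avals.orderEmbOfFin rfl j with hwdef
      have hw : StrictMono w := (Avals.orderEmbOfFin rfl).strictMono
      set jd : P → Fin m := fun p =>
        if h : lam p ∈ Avals then (Avals.orderIsoOfFin rfl).symm ⟨lam p, h⟩
        else ⟨0, hm⟩ with hjddef
      have hjd : ∀ a ∈ A, w (jd a) = lam a := by
        intro a ha
        have hmem := hAvalsmem a ha
        simp only [hjddef, dif_pos hmem]
        have h1 : (Avals.orderIsoOfFin rfl) ((Avals.orderIsoOfFin rfl).symm ⟨lam a, hmem⟩)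
            = ⟨lam a, hmem⟩ := OrderIso.apply_symm_apply _ _
        have h2 := congrArg Subtype.val h1
        rw [hwdef]
        simp only
        rw [← Finset.coe_orderIsoOfFin_apply]
        exact h2
      have hjdmono : ∀ a ∈ A, ∀ b ∈ A, a ≤ b → jd a ≤ jd b := by
        intro a ha b hb hab
        have h := hlam a ha b hb hab
        rw [← hjd a ha, ← hjd b hb] at h
        exact hw.le_iff_le.1 h
      have hsurj : ∀ j : Fin m, ∃ a ∈ A, jd a = j := by
        intro j
        have hmem : w j ∈ Avals := Finset.orderEmbOfFin_mem _ _ _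
        rw [hAvals] at hmem
        obtain ⟨a, haf, hwa⟩ := Finset.mem_image.1 hmem
        have ha : a ∈ A := (Finset.mem_filter.1 haf).2
        refine ⟨a, ha, ?_⟩
        have h := hjd a ha
        rw [hwa] at h
        exact hw.injective h
      set Wr : Fin m → ℝ := fun j => ((w j : ℤ) : ℝ) with hWrdef
      have hWr : StrictMono Wr := fun a b h => by
        simp only [hWrdef]
        exact_mod_cast hw h
      have hOeq : markedOrderPolytope P A (fun p => (lam p : ℝ))
          = MOP.Tset A (fun p => Wr (jd p)) := by
        ext φ
        constructor
        · rintro ⟨h1, h2⟩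
          refine ⟨h1, fun a ha => ?_⟩
          rw [h2 a ha]
          simp only [hWrdef]
          exact_mod_cast (hjd a ha).symm
        · rintro ⟨h1, h2⟩
          refine ⟨h1, fun a ha => ?_⟩
          rw [h2 a ha]
          simp only [hWrdef]
          exact_mod_cast (hjd a ha)
      haveI := MOP.finite_pat A m jd
      haveI : Fintype (MOP.Pat P A m jd) := Fintype.ofFinite _
      set q : Polynomial ℝ := ∑ π : MOP.Pat P A m jd, MOP.patPoly w π with hqdef
      obtain ⟨φs, hφs, hmaxim⟩ := MOP.exists_maximizer (jd := jd) (Wr := Wr)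
        (MOP.Tset_nonempty hA1 (fun a ha b hb hab => hWr.monotone (hjdmono a ha b hb hab)))
      have hresp := MOP.maximizer_resp hφs hmaxim
      set D := (affineSpan ℝ (MOP.Tset A fun p => Wr (jd p))).direction with hDdef
      have hub : Module.finrank ℝ D ≤ ∑ j : Fin (m-1), MOP.kOf Wr φs j :=
        MOP.finrank_le_of_maximizer hm hWr hA1 hA2 hsurj hφs hresp
      have hall : ∀ π : MOP.Pat P A m jd, (∑ j : Fin (m-1), π.k j) ≤ Module.finrank ℝ D :=
        fun π => MOP.pat_card_le_finrank hWr π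
      set πs := MOP.patOf hm hWr jd hA1 hA2 φs hφs with hπs
      have hks : ∀ j, πs.k j = MOP.kOf Wr φs j := fun j => rfl
      have hdim : Module.finrank ℝ D = ∑ j : Fin (m-1), πs.k j := by
        apply le_antisymm
        · calc Module.finrank ℝ D ≤ ∑ j : Fin (m-1), MOP.kOf Wr φs j := hub
            _ = ∑ j : Fin (m-1), πs.k j := by
              apply Finset.sum_congr rfl
              intro j _
              rw [hks]
        · exact hall πs
      have hdegle : q.natDegree ≤ Module.finrank ℝ D := by
        rw [hqdef]
        apply Polynomial.natDegree_sum_le_of_forall_le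
        intro π _
        rw [MOP.patPoly_natDegree hw]
        exact hall π
      have hcoeffpos : 0 < q.coeff (Module.finrank ℝ D) := by
        rw [hqdef, Polynomial.finset_sum_coeff]
        apply Finset.sum_pos'
        · intro π _
          have hle : (MOP.patPoly w π).natDegree ≤ Module.finrank ℝ D := by
            rw [MOP.patPoly_natDegree hw]
            exact hall π
          rcases lt_or_eq_of_le hle with hlt | heq
          · rw [Polynomial.coeff_eq_zero_of_natDegree_lt hlt]
          · rw [← heq, Polynomial.coeff_natDegree]
            exact (MOP.patPoly_leadingCoeff_pos hw π).le
        · refine ⟨πs, Finset.mem_univ _, ?_⟩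
          have hd : (MOP.patPoly w πs).natDegree = Module.finrank ℝ D := by
            rw [MOP.patPoly_natDegree hw, hdim]
          rw [← hd, Polynomial.coeff_natDegree]
          exact MOP.patPoly_leadingCoeff_pos hw πs
      have hdeg : q.natDegree = Module.finrank ℝ D :=
        le_antisymm hdegle (Polynomial.le_natDegree_of_ne_zero hcoeffpos.ne')
      refine ⟨q, ?_, ?_⟩
      · rw [hdeg, hDdef, hOeq]
      · intro n hn
        set Wn : Fin m → ℤ := fun j => (n:ℤ) * w j with hWndef
        have hWn : StrictMono Wn := by
          intro a b h
          simp only [hWndef]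
          have h1 : w a < w b := hw h
          have hn' : (0:ℤ) < (n:ℤ) := by exact_mod_cast hn
          nlinarith
        have hCeq : {φ : P → ℤ | Monotone φ ∧ ∀ a ∈ A, φ a = (n:ℤ) * lam a}
            = MOP.Tset A (fun p => Wn (jd p)) := by
          ext φ
          constructor
          · rintro ⟨h1, h2⟩
            refine ⟨h1, fun a ha => ?_⟩
            rw [h2 a ha]
            simp only [hWndef]
            rw [hjd a ha]
          · rintro ⟨h1, h2⟩
            refine ⟨h1, fun a ha => ?_⟩
            rw [h2 a ha]
            simp only [hWndef]
            rw [hjd a ha]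
        rw [hCeq]
        rw [MOP.card_Tset (jd := jd) (W := Wn) hm hWn hA1 hA2]
        rw [finsum_eq_sum_of_fintype]
        push_cast
        rw [hqdef, Polynomial.eval_finset_sum]
        apply Finset.sum_congr rfl
        intro π _
        rw [MOP.patPoly_eval hw π hn]
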